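/- Let ẋ = f(x) with f Lipschitz continuous on ℝ^n, and let C = {x : h(x) ≥ 0} for a C¹ function h. If along every solution x(t) one has (d/dt) h(x(t)) ≥ −γ(h(x(t))) for a locally Lipschitz extended class-K function γ, then C is forward invariant: x(0) ∈ C implies x(t) ∈ C for all t ≥ 0 in the interval of existence. -/

import Mathlib

def ClassKe (γ : ℝ → ℝ) : Prop := Continuous γ ∧ StrictMono γ ∧ γ 0 = 0

theorem forward_invariance_superlevel (n : ℕ) (K : NNReal)
    (f : EuclideanSpace ℝ (Fin n) → EuclideanSpace ℝ (Fin n))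
    (hf : LipschitzWith K f)
    (h : EuclideanSpace ℝ (Fin n) → ℝ) (hh : ContDiff ℝ 1 h)
    (γ : ℝ → ℝ) (hγ : ClassKe γ) (hγlip : LocallyLipschitz γ)
    (T : ℝ) (x : ℝ → EuclideanSpace ℝ (Fin n))
    (hsol : ∀ t ∈ Set.Ico (0 : ℝ) T, HasDerivAt x (f (x t)) t)
    (hineq : ∀ t ∈ Set.Ico (0 : ℝ) T, deriv (fun s => h (x s)) t ≥ -γ (h (x t)))
    (h0 : h (x 0) ≥ 0) (hT : 0 < T) :
    ∀ t ∈ Set.Ico (0 : ℝ) T, h (x t) ≥ 0 := by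
  obtain ⟨hγc, hγmono, hγ0⟩ := hγ
  intro t₀ ht₀
  by_contra hneg
  push_neg at hneg
  set y : ℝ → ℝ := fun s => h (x s) with hy
  have hdiff : ∀ t ∈ Set.Ico (0 : ℝ) T, DifferentiableAt ℝ y t := by
    intro t ht
    exact ((hh.differentiable one_ne_zero (x t)).comp t (hsol t ht).differentiableAt)
  have hsub : Set.Icc (0 : ℝ) t₀ ⊆ Set.Ico 0 T :=
    Set.Icc_subset_Ico_iff ht₀.1 |>.mpr ⟨le_rfl, ht₀.2⟩
  have hcont : ContinuousOn y (Set.Icc 0 t₀) := fun t ht =>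
    (hdiff t (hsub ht)).continuousAt.continuousWithinAt
  set S : Set ℝ := Set.Icc 0 t₀ ∩ y ⁻¹' Set.Ici 0 with hS
  have hS0 : (0 : ℝ) ∈ S := ⟨⟨le_rfl, ht₀.1⟩, h0⟩
  have hScl : IsClosed S :=
    hcont.preimage_isClosed_of_isClosed isClosed_Icc isClosed_Ici
  have hScomp : IsCompact S :=
    isCompact_Icc.of_isClosed_subset hScl Set.inter_subset_left
  set t₁ := sSup S with ht₁
  have hsmem : t₁ ∈ S := hScomp.sSup_mem ⟨0, hS0⟩
  have hs0 : 0 ≤ t₁ := hsmem.1.1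
  have hst₀ : t₁ < t₀ := lt_of_le_of_ne hsmem.1.2 (fun heq =>
    absurd (heq ▸ hsmem.2) (not_le.mpr hneg))
  have hnegOn : ∀ t, t₁ < t → t ≤ t₀ → y t < 0 := by
    intro t hst htt
    by_contra hge
    push_neg at hge
    have : t ∈ S := ⟨⟨hs0.trans hst.le, htt⟩, hge⟩
    exact absurd (le_csSup hScomp.bddAbove this) (not_le.mpr hst)
  have hmono : StrictMonoOn y (Set.Icc t₁ t₀) := by
    apply strictMonoOn_of_deriv_pos (convex_Icc t₁ t₀)
      (hcont.mono (Set.Icc_subset_Icc hs0 le_rfl))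
    intro t ht
    rw [interior_Icc] at ht
    have htI : t ∈ Set.Ico (0 : ℝ) T := hsub ⟨hs0.trans ht.1.le, ht.2.le⟩
    have hyt : y t < 0 := hnegOn t ht.1 ht.2.le
    have : γ (y t) < γ 0 := hγmono hyt
    rw [hγ0] at this
    calc (0:ℝ) < -γ (y t) := by linarith
    _ ≤ deriv y t := hineq t htI
  have : y t₁ < y t₀ := hmono ⟨le_rfl, hst₀.le⟩ ⟨hst₀.le, le_rfl⟩ hst₀
  have hys : (0:ℝ) ≤ y t₁ := hsmem.2
  exact absurd (hys.trans this.le) (not_le.mpr hneg)
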